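/- arXiv:2305.06659 — 2 statements merged into one kernel-verified Lean document; each statement's English description precedes it below -/
import Mathlib

section
/- (Stripping matched end characters) If a weight function w satisfies the triangle inequality (w(a,b) ≤ w(a,c) + w(c,b) for all a,b,c ∈ Σ ∪ {ε}), then for every character a ∈ Σ and all strings X, Y: wed(a·X, a·Y) = wed(X, Y) = wed(X·a, Y·a). -/
abbrev Pt : Type := ℕ × ℕ

/-- A single step in an alignment path: right (deletion of an `X`-character),
down (insertion of a `Y`-character), or diagonal (aligning a pair of characters). -/
def AlignStep (p q : Pt) : Prop :=
  q = (p.1 + 1, p.2) ∨ q = (p.1, p.2 + 1) ∨ q = (p.1 + 1, p.2 + 1)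

/-- `A` is a monotone lattice path from `s` to `t` in the alignment graph. -/
def IsPath (s t : Pt) (A : List Pt) : Prop :=
  A.head? = some s ∧ A.getLast? = some t ∧ A.Chain' AlignStep

/-- The edges (consecutive pairs) of a path. -/
def edges (A : List Pt) : List (Pt × Pt) := A.zip A.tail

/-- Unweighted edit cost contributed by one edge: a diagonal edge costs 0 if the
two characters match and 1 otherwise (substitution); horizontal/vertical edges
(deletions/insertions) cost 1. -/
def edStep {α : Type*} [DecidableEq α] (X Y : List α) (e : Pt × Pt) : ℕ :=
  if e.2 = (e.1.1 + 1, e.1.2 + 1) then (if X[e.1.1]? = Y[e.1.2]? then 0 else 1) else 1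

/-- The number of edits made by the alignment (path) `A` of `X` onto `Y`. -/
def edCost {α : Type*} [DecidableEq α] (X Y : List α) (A : List Pt) : ℕ :=
  ((edges A).map (edStep X Y)).sum

/-- Weighted cost contributed by one edge, under weight function `w` (with `none` playing
the role of `ε`): diagonal edges cost `w X[x] Y[y]`, horizontal `w X[x] ε`, vertical `w ε Y[y]`. -/
noncomputable def wStep {α : Type*} (w : Option α → Option α → ℝ) (X Y : List α)
    (e : Pt × Pt) : ℝ :=
  if e.2 = (e.1.1 + 1, e.1.2 + 1) then w (X[e.1.1]?) (Y[e.1.2]?)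
  else if e.2 = (e.1.1 + 1, e.1.2) then w (X[e.1.1]?) none
  else w none (Y[e.1.2]?)

/-- The weighted cost of the alignment (path) `A` of `X` onto `Y` under `w`. -/
noncomputable def wCost {α : Type*} (w : Option α → Option α → ℝ) (X Y : List α)
    (A : List Pt) : ℝ :=
  ((edges A).map (wStep w X Y)).sum

/-- Unweighted (Levenshtein) edit distance. -/
noncomputable def ed {α : Type*} [DecidableEq α] (X Y : List α) : ℕ :=
  sInf { c | ∃ A, IsPath (0, 0) (X.length, Y.length) A ∧ edCost X Y A = c }

/-- Weighted edit distance under `w`. -/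
noncomputable def wed {α : Type*} (w : Option α → Option α → ℝ) (X Y : List α) : ℝ :=
  sInf { c | ∃ A, IsPath (0, 0) (X.length, Y.length) A ∧ wCost w X Y A = c }

/-- A path contains no diagonal edge on the main diagonal,
i.e. it never aligns a character to itself. -/
def NoSelfDiag (A : List Pt) : Prop :=
  ∀ e ∈ edges A, ¬ (e.1.1 = e.1.2 ∧ e.2 = (e.1.1 + 1, e.1.2 + 1))

/-- The self-edit distance of `X`: the minimum number of edits over all
self-alignments of `X` (alignments of `X` onto itself never aligning a character
to itself). -/
noncomputable def selfed {α : Type*} [DecidableEq α] (X : List α) : ℕ :=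
  sInf { c | ∃ A, IsPath (0, 0) (X.length, X.length) A ∧ NoSelfDiag A ∧ edCost X X A = c }

/-- The fragment `X[a..b)`. -/
def frag {α : Type*} (X : List α) (a b : ℕ) : List α := (X.drop a).take (b - a)

/- ===== Auxiliary definitions and lemmas ===== -/

section AuxWED

variable {α : Type*}

noncomputable def dwed (w : Option α → Option α → ℝ) : List α → List α → ℝ
  | [], [] => 0
  | x :: X, [] => w (some x) none + dwed w X []
  | [], y :: Y => w none (some y) + dwed w [] Y
  | x :: X, y :: Y =>
      min (w (some x) (some y) + dwed w X Y)
        (min (w (some x) none + dwed w X (y :: Y)) (w none (some y) + dwed w (x :: X) Y))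
  termination_by X Y => X.length + Y.length


-- helper: shift
def sh (d : Pt) (p : Pt) : Pt := (p.1 + d.1, p.2 + d.2)

lemma mem_of_getLast? {l : List Pt} {a : Pt} (h : l.getLast? = some a) : a ∈ l := by
  obtain ⟨hne, rfl⟩ := List.mem_getLast?_eq_getLast (by rw [h]; rfl)
  exact List.getLast_mem hne

lemma edges_singleton (p : Pt) : edges [p] = [] := rfl

lemma edges_cons_cons (p q : Pt) (l : List Pt) :
    edges (p :: q :: l) = (p, q) :: edges (q :: l) := rfl

lemma edges_map (f : Pt → Pt) (A : List Pt) :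
    edges (A.map f) = (edges A).map (fun e => (f e.1, f e.2)) := by
  unfold edges
  rw [← List.map_tail, List.zip_map]
  rfl


section
variable (w : Option α → Option α → ℝ) (hw0 : ∀ a, w a a = 0) (hwnn : ∀ a b, 0 ≤ w a b)
  (htri : ∀ a b c, w a b ≤ w a c + w c b)

include hwnn in
lemma dwed_nonneg : ∀ X Y : List α, 0 ≤ dwed w X Y
  | [], [] => by rw [dwed]
  | x :: X, [] => by rw [dwed]; exact add_nonneg (hwnn _ _) (dwed_nonneg X [])
  | [], y :: Y => by rw [dwed]; exact add_nonneg (hwnn _ _) (dwed_nonneg [] Y)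
  | x :: X, y :: Y => by
      rw [dwed]
      exact le_min (add_nonneg (hwnn _ _) (dwed_nonneg X Y))
        (le_min (add_nonneg (hwnn _ _) (dwed_nonneg X (y :: Y)))
          (add_nonneg (hwnn _ _) (dwed_nonneg (x :: X) Y)))
  termination_by X Y => X.length + Y.length

lemma dwed_del_le (x : α) (X Y : List α) :
    dwed w (x :: X) Y ≤ w (some x) none + dwed w X Y := by
  cases Y with
  | nil => rw [dwed]
  | cons y Y => rw [dwed]; exact (min_le_right _ _).trans (min_le_left _ _)

lemma dwed_ins_le (y : α) (X Y : List α) :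
    dwed w X (y :: Y) ≤ w none (some y) + dwed w X Y := by
  cases X with
  | nil => rw [dwed]
  | cons x X => rw [dwed]; exact (min_le_right _ _).trans (min_le_right _ _)

lemma dwed_diag_le (x y : α) (X Y : List α) :
    dwed w (x :: X) (y :: Y) ≤ w (some x) (some y) + dwed w X Y := by
  rw [dwed]; exact min_le_left _ _

include hwnn htri in
lemma dwed_strip_right (c : α) : ∀ X Y : List α,
    dwed w X Y ≤ w (some c) none + dwed w X (c :: Y) := by
  intro X
  induction X with
  | nil =>
    intro Y
    rw [dwed]
    have := dwed_nonneg w hwnn ([] : List α) Y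
    have := hwnn (some c) none; have := hwnn none (some c)
    linarith
  | cons x X ih =>
    intro Y
    conv_rhs => rw [dwed]
    rw [← min_add_add_left, ← min_add_add_left]
    refine le_min ?_ (le_min ?_ ?_)
    · have h1 := dwed_del_le w x X Y
      have h2 := htri (some x) none (some c)
      linarith
    · have h1 := dwed_del_le w x X Y
      have h2 := ih Y
      linarith
    · have := hwnn (some c) none; have := hwnn none (some c)
      have := dwed_nonneg w hwnn (x :: X) Y
      linarith

include hwnn htri in
lemma dwed_strip_left (c : α) : ∀ Y X : List α,
    dwed w X Y ≤ w none (some c) + dwed w (c :: X) Y := by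
  intro Y
  induction Y with
  | nil =>
    intro X
    rw [dwed]
    have := dwed_nonneg w hwnn X ([] : List α)
    have := hwnn (some c) none; have := hwnn none (some c)
    linarith
  | cons y Y ih =>
    intro X
    conv_rhs => rw [dwed]
    rw [← min_add_add_left, ← min_add_add_left]
    refine le_min ?_ (le_min ?_ ?_)
    · have h1 := dwed_ins_le w y X Y
      have h2 := htri none (some y) (some c)
      linarith
    · have := hwnn (some c) none; have := hwnn none (some c)
      have := dwed_nonneg w hwnn X (y :: Y)
      linarith
    · have h1 := dwed_ins_le w y X Y
      have h2 := ih X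
      linarith

include hw0 hwnn htri in
lemma dwed_cons_cons (c : α) (X Y : List α) :
    dwed w (c :: X) (c :: Y) = dwed w X Y := by
  refine le_antisymm ?_ ?_
  · have := dwed_diag_le w c c X Y
    rw [hw0] at this
    linarith
  · rw [dwed]
    refine le_min ?_ (le_min ?_ ?_)
    · rw [hw0]; linarith
    · exact dwed_strip_right w hwnn htri c X Y
    · exact dwed_strip_left w hwnn htri c Y X

lemma dwed_nil_append (c : α) : ∀ Z : List α,
    dwed w [] (Z ++ [c]) = dwed w [] Z + w none (some c)
  | [] => by simp only [List.nil_append]; rw [dwed, dwed, dwed]; ring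
  | z :: Z => by
    rw [List.cons_append]
    rw [dwed, dwed, dwed_nil_append c Z]; ring

lemma dwed_append_nil (c : α) : ∀ Z : List α,
    dwed w (Z ++ [c]) [] = dwed w Z [] + w (some c) none
  | [] => by simp only [List.nil_append]; rw [dwed, dwed, dwed]; ring
  | z :: Z => by
    rw [List.cons_append]
    rw [dwed, dwed, dwed_append_nil c Z]; ring

include hw0 hwnn in
lemma dwed_single (c : α) : dwed w [c] [c] = 0 := by
  have h1 : dwed w ([] : List α) [c] = w none (some c) := by rw [dwed, dwed]; ring
  have h2 : dwed w [c] ([] : List α) = w (some c) none := by rw [dwed, dwed]; ring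
  have h3 : dwed w ([] : List α) [] = 0 := by rw [dwed]
  rw [show ([c] : List α) = c :: [] from rfl, dwed, h1, h2, h3, hw0]
  have := hwnn (some c) none; have := hwnn none (some c)
  refine le_antisymm ?_ ?_
  · exact (min_le_left _ _).trans (by linarith)
  · refine le_min (by linarith) (le_min (by linarith) (by linarith))

include hw0 hwnn htri in
lemma dwed_append_append (c : α) : ∀ n (X Y : List α), X.length + Y.length ≤ n →
    dwed w (X ++ [c]) (Y ++ [c]) = dwed w X Y := by
  intro n
  induction n with
  | zero =>
    intro X Y hlen
    have hX : X = [] := by cases X <;> simp_all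
    have hY : Y = [] := by cases Y <;> simp_all
    subst hX; subst hY
    simp only [List.nil_append]
    rw [dwed_single w hw0 hwnn c, dwed]
  | succ n ih =>
    intro X Y hlen
    cases X with
    | nil =>
      cases Y with
      | nil =>
        simp only [List.nil_append]
        rw [dwed_single w hw0 hwnn c, dwed]
      | cons y Y =>
        simp only [List.nil_append, List.cons_append]
        have h1 : dwed w [] (Y ++ [c]) = dwed w [] Y + w none (some c) :=
          dwed_nil_append w c Y
        have h2 : dwed w [c] (Y ++ [c]) = dwed w [] Y := by
          simpa using ih [] Y (by simp at hlen ⊢; omega)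
        have h3 : dwed w [] (y :: (Y ++ [c]))
            = w none (some y) + (dwed w [] Y + w none (some c)) := by
          rw [dwed, h1]
        conv_lhs => rw [dwed]
        conv_rhs => rw [dwed]
        rw [h1, h2, h3]
        have t1 := htri none (some y) (some c)
        have t2 := hwnn (some c) none; have t3 := hwnn none (some c)
        refine le_antisymm ((min_le_right _ _).trans (min_le_right _ _))
          (le_min (by linarith) (le_min (by linarith) (by linarith)))
    | cons x X =>
      cases Y with
      | nil =>
        simp only [List.nil_append, List.cons_append]
        have h1 : dwed w (X ++ [c]) [] = dwed w X [] + w (some c) none :=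
          dwed_append_nil w c X
        have h2 : dwed w (x :: (X ++ [c])) []
            = w (some x) none + (dwed w X [] + w (some c) none) := by
          rw [dwed, h1]
        have h3 : dwed w (X ++ [c]) [c] = dwed w X [] := by
          simpa using ih X [] (by simp at hlen ⊢; omega)
        conv_lhs => rw [dwed]
        conv_rhs => rw [dwed]
        rw [h1, h2, h3]
        have t1 := htri (some x) none (some c)
        have t2 := hwnn (some c) none; have t3 := hwnn none (some c)
        refine le_antisymm ((min_le_right _ _).trans (min_le_left _ _))
          (le_min (by linarith) (le_min (by linarith) (by linarith)))
      | cons y Y =>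
        simp only [List.cons_append]
        have h1 : dwed w (X ++ [c]) (Y ++ [c]) = dwed w X Y :=
          ih X Y (by simp at hlen ⊢; omega)
        have h2 : dwed w (X ++ [c]) (y :: (Y ++ [c])) = dwed w X (y :: Y) := by
          simpa using ih X (y :: Y) (by simp at hlen ⊢; omega)
        have h3 : dwed w (x :: (X ++ [c])) (Y ++ [c]) = dwed w (x :: X) Y := by
          simpa using ih (x :: X) Y (by simp at hlen ⊢; omega)
        conv_lhs => rw [dwed]
        conv_rhs => rw [dwed]
        rw [h1, h2, h3]



include hwnn in
lemma wStep_nonneg (X Y : List α) (e : Pt × Pt) : 0 ≤ wStep w X Y e := by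
  unfold wStep; split_ifs <;> apply hwnn

include hwnn in
lemma wCost_nonneg (X Y : List α) (A : List Pt) : 0 ≤ wCost w X Y A := by
  unfold wCost
  apply List.sum_nonneg
  intro x hx
  obtain ⟨e, -, rfl⟩ := List.mem_map.1 hx
  exact wStep_nonneg w hwnn X Y e

lemma wCost_singleton (X Y : List α) (p : Pt) : wCost w X Y [p] = 0 := by
  simp [wCost, edges_singleton]

lemma wCost_cons_cons (X Y : List α) (p q : Pt) (l : List Pt) :
    wCost w X Y (p :: q :: l) = wStep w X Y (p, q) + wCost w X Y (q :: l) := by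
  simp [wCost, edges_cons_cons]

lemma wCost_shift (d : Pt) (X Y X' Y' : List α)
    (hX : ∀ i, X[i + d.1]? = X'[i]?) (hY : ∀ j, Y[j + d.2]? = Y'[j]?)
    (A : List Pt) : wCost w X Y (A.map (sh d)) = wCost w X' Y' A := by
  unfold wCost
  rw [edges_map, List.map_map]
  congr 1
  apply List.map_congr_left
  rintro ⟨⟨p1, p2⟩, ⟨q1, q2⟩⟩ -
  simp only [Function.comp_apply, wStep, sh, Prod.mk.injEq]
  have c1 : (q1 + d.1 = p1 + d.1 + 1 ∧ q2 + d.2 = p2 + d.2 + 1) ↔ (q1 = p1 + 1 ∧ q2 = p2 + 1) := by omega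
  have c2 : (q1 + d.1 = p1 + d.1 + 1 ∧ q2 + d.2 = p2 + d.2) ↔ (q1 = p1 + 1 ∧ q2 = p2) := by omega
  rw [if_congr c1 rfl rfl, if_congr c2 rfl rfl, hX p1, hY p2]

lemma alignStep_sh {d : Pt} {p q : Pt} (h : AlignStep p q) : AlignStep (sh d p) (sh d q) := by
  rcases p with ⟨p1, p2⟩; rcases q with ⟨q1, q2⟩
  simp only [AlignStep, sh, Prod.mk.injEq] at h ⊢
  omega

lemma isPath_shift {d s t : Pt} {A : List Pt} (h : IsPath s t A) :
    IsPath (sh d s) (sh d t) (A.map (sh d)) := by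
  obtain ⟨h1, h2, h3⟩ := h
  refine ⟨?_, ?_, ?_⟩
  · rw [List.head?_map, h1]; rfl
  · rw [List.getLast?_map, h2]; rfl
  · show List.IsChain _ _; rw [List.isChain_map]
    exact (show List.IsChain AlignStep A from h3).imp (fun a b => alignStep_sh)

lemma isPath_cons {s p t : Pt} {A : List Pt} (hs : AlignStep s p) (h : IsPath p t A) :
    IsPath s t (s :: A) := by
  obtain ⟨h1, h2, h3⟩ := h
  cases A with
  | nil => simp at h1
  | cons q l =>
    have hq : q = p := by simpa using h1
    subst hq
    exact ⟨rfl, by rw [List.getLast?_cons_cons]; exact h2, List.isChain_cons_cons.2 ⟨hs, h3⟩⟩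

lemma exists_path : ∀ m n : ℕ, ∃ A, IsPath (0, 0) (m, n) A := by
  intro m
  induction m with
  | zero =>
    intro n
    induction n with
    | zero => exact ⟨[(0, 0)], rfl, rfl, List.isChain_singleton _⟩
    | succ n ih =>
      obtain ⟨A, hA⟩ := ih
      have hA' : IsPath (0, 1) (0, n + 1) (A.map (sh (0, 1))) := by
        have := isPath_shift (d := (0, 1)) hA
        simpa [sh] using this
      exact ⟨_, isPath_cons (Or.inr (Or.inl rfl)) hA'⟩
  | succ m ih =>
    intro n
    obtain ⟨A, hA⟩ := ih n
    have hA' : IsPath (1, 0) (m + 1, n) (A.map (sh (1, 0))) := by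
      have := isPath_shift (d := (1, 0)) hA
      simpa [sh] using this
    exact ⟨_, isPath_cons (Or.inl rfl) hA'⟩

-- monotonicity along a chain
lemma chain_head_le : ∀ (A : List Pt), A.Chain' AlignStep → ∀ s, A.head? = some s →
    ∀ p ∈ A, s.1 ≤ p.1 ∧ s.2 ≤ p.2 := by
  intro A
  induction A with
  | nil => intro _ s hs; simp at hs
  | cons a l ih =>
    intro hc s hs p hp
    have ha : a = s := by simpa using hs
    subst ha
    rcases List.mem_cons.1 hp with rfl | hp
    · exact ⟨le_refl _, le_refl _⟩
    cases l with
    | nil => simp at hp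
    | cons b l' =>
      have hab : AlignStep a b := (List.isChain_cons_cons.1 hc).1
      have hb := ih (List.isChain_cons_cons.1 hc).2 b rfl p hp
      rcases hab with h | h | h <;> rw [h] at hb <;>
        exact ⟨le_trans (by simp) hb.1, le_trans (by simp) hb.2⟩

lemma isPath_le {s t : Pt} {A : List Pt} (h : IsPath s t A) : s.1 ≤ t.1 ∧ s.2 ≤ t.2 :=
  chain_head_le A h.2.2 s h.1 t (mem_of_getLast? h.2.1)

lemma dwed_del_le' (x : α) (X Y : List α) :
    dwed w (x :: X) Y ≤ w (some x) none + dwed w X Y := by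
  cases Y with
  | nil => rw [dwed]
  | cons y Y => rw [dwed]; exact (min_le_right _ _).trans (min_le_left _ _)

lemma dwed_ins_le' (y : α) (X Y : List α) :
    dwed w X (y :: Y) ≤ w none (some y) + dwed w X Y := by
  cases X with
  | nil => rw [dwed]
  | cons x X => rw [dwed]; exact (min_le_right _ _).trans (min_le_right _ _)

lemma dwed_diag_le' (x y : α) (X Y : List α) :
    dwed w (x :: X) (y :: Y) ≤ w (some x) (some y) + dwed w X Y := by
  rw [dwed]; exact min_le_left _ _

-- the wed set
def wedSet (X Y : List α) : Set ℝ :=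
  { c | ∃ A, IsPath (0, 0) (X.length, Y.length) A ∧ wCost w X Y A = c }

lemma wed_eq_sInf (X Y : List α) : wed w X Y = sInf (wedSet w X Y) := rfl

lemma wedSet_nonempty (X Y : List α) : (wedSet w X Y).Nonempty := by
  obtain ⟨A, hA⟩ := exists_path X.length Y.length
  exact ⟨_, A, hA, rfl⟩

include hwnn in
lemma wedSet_bddBelow (X Y : List α) : BddBelow (wedSet w X Y) := by
  refine ⟨0, ?_⟩
  rintro c ⟨A, -, rfl⟩
  exact wCost_nonneg w hwnn X Y A

include hwnn in
lemma wed_le_del (x : α) (X Y : List α) :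
    wed w (x :: X) Y ≤ w (some x) none + wed w X Y := by
  rw [wed_eq_sInf, wed_eq_sInf]
  have key : ∀ t ∈ wedSet w X Y, sInf (wedSet w (x :: X) Y) ≤ w (some x) none + t := by
    rintro t ⟨A, hA, rfl⟩
    refine csInf_le (wedSet_bddBelow w hwnn _ _) ?_
    have h1 := hA.1
    cases A with
    | nil => simp at h1
    | cons a l =>
      have ha : a = (0, 0) := by simpa using h1
      subst ha
      have hA' : IsPath (1, 0) (X.length + 1, Y.length) (((0,0) :: l).map (sh (1, 0))) := by
        have := isPath_shift (d := (1, 0)) hA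
        simpa [sh] using this
      refine ⟨(0, 0) :: ((0,0) :: l).map (sh (1, 0)), ⟨isPath_cons (Or.inl rfl) (by simpa using hA'), ?_⟩⟩
      have hmap : ((0,0) :: l).map (sh (1, 0)) = (1, 0) :: l.map (sh (1, 0)) := rfl
      rw [hmap, wCost_cons_cons, ← hmap,
        wCost_shift w (1, 0) (x :: X) Y X Y (fun i => rfl) (fun j => by rw [Nat.add_zero])]
      congr 1
  have h2 : sInf (wedSet w (x :: X) Y) - w (some x) none ≤ sInf (wedSet w X Y) := by
    refine le_csInf (wedSet_nonempty w X Y) (fun t ht => ?_)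
    linarith [key t ht]
  linarith

include hwnn in
lemma wed_le_ins (y : α) (X Y : List α) :
    wed w X (y :: Y) ≤ w none (some y) + wed w X Y := by
  rw [wed_eq_sInf, wed_eq_sInf]
  have key : ∀ t ∈ wedSet w X Y, sInf (wedSet w X (y :: Y)) ≤ w none (some y) + t := by
    rintro t ⟨A, hA, rfl⟩
    refine csInf_le (wedSet_bddBelow w hwnn _ _) ?_
    have h1 := hA.1
    cases A with
    | nil => simp at h1
    | cons a l =>
      have ha : a = (0, 0) := by simpa using h1
      subst ha
      have hA' : IsPath (0, 1) (X.length, Y.length + 1) (((0,0) :: l).map (sh (0, 1))) := by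
        have := isPath_shift (d := (0, 1)) hA
        simpa [sh] using this
      refine ⟨(0, 0) :: ((0,0) :: l).map (sh (0, 1)), ⟨isPath_cons (Or.inr (Or.inl rfl)) (by simpa using hA'), ?_⟩⟩
      have hmap : ((0,0) :: l).map (sh (0, 1)) = (0, 1) :: l.map (sh (0, 1)) := rfl
      rw [hmap, wCost_cons_cons, ← hmap,
        wCost_shift w (0, 1) X (y :: Y) X Y (fun i => by rw [Nat.add_zero]) (fun j => rfl)]
      congr 1
  have h2 : sInf (wedSet w X (y :: Y)) - w none (some y) ≤ sInf (wedSet w X Y) := by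
    refine le_csInf (wedSet_nonempty w X Y) (fun t ht => ?_)
    linarith [key t ht]
  linarith

include hwnn in
lemma wed_le_diag (x y : α) (X Y : List α) :
    wed w (x :: X) (y :: Y) ≤ w (some x) (some y) + wed w X Y := by
  rw [wed_eq_sInf, wed_eq_sInf]
  have key : ∀ t ∈ wedSet w X Y, sInf (wedSet w (x :: X) (y :: Y)) ≤ w (some x) (some y) + t := by
    rintro t ⟨A, hA, rfl⟩
    refine csInf_le (wedSet_bddBelow w hwnn _ _) ?_
    have h1 := hA.1
    cases A with
    | nil => simp at h1
    | cons a l =>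
      have ha : a = (0, 0) := by simpa using h1
      subst ha
      have hA' : IsPath (1, 1) (X.length + 1, Y.length + 1) (((0,0) :: l).map (sh (1, 1))) := by
        have := isPath_shift (d := (1, 1)) hA
        simpa [sh] using this
      refine ⟨(0, 0) :: ((0,0) :: l).map (sh (1, 1)), ⟨isPath_cons (Or.inr (Or.inr rfl)) (by simpa using hA'), ?_⟩⟩
      have hmap : ((0,0) :: l).map (sh (1, 1)) = (1, 1) :: l.map (sh (1, 1)) := rfl
      rw [hmap, wCost_cons_cons, ← hmap,
        wCost_shift w (1, 1) (x :: X) (y :: Y) X Y (fun i => rfl) (fun j => rfl)]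
      congr 1
  have h2 : sInf (wedSet w (x :: X) (y :: Y)) - w (some x) (some y) ≤ sInf (wedSet w X Y) := by
    refine le_csInf (wedSet_nonempty w X Y) (fun t ht => ?_)
    linarith [key t ht]
  linarith

include hwnn in
lemma wed_nil_nil : wed w ([] : List α) [] ≤ 0 := by
  rw [wed_eq_sInf]
  refine csInf_le (wedSet_bddBelow w hwnn _ _) ?_
  exact ⟨[(0, 0)], ⟨rfl, rfl, List.isChain_singleton _⟩, wCost_singleton w _ _ _⟩

include hwnn in
lemma wed_le_dwed : ∀ n (X Y : List α), X.length + Y.length ≤ n →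
    wed w X Y ≤ dwed w X Y := by
  intro n
  induction n with
  | zero =>
    intro X Y hlen
    have hX : X = [] := by cases X <;> simp_all
    have hY : Y = [] := by cases Y <;> simp_all
    subst hX; subst hY
    rw [dwed]
    exact wed_nil_nil w hwnn
  | succ n ih =>
    intro X Y hlen
    cases X with
    | nil =>
      cases Y with
      | nil => rw [dwed]; exact wed_nil_nil w hwnn
      | cons y Y =>
        rw [dwed]
        calc wed w [] (y :: Y) ≤ w none (some y) + wed w [] Y := wed_le_ins w hwnn y [] Y
        _ ≤ w none (some y) + dwed w [] Y := by
            have := ih [] Y (by simp at hlen ⊢; omega); linarith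
    | cons x X =>
      cases Y with
      | nil =>
        rw [dwed]
        calc wed w (x :: X) [] ≤ w (some x) none + wed w X [] := wed_le_del w hwnn x X []
        _ ≤ w (some x) none + dwed w X [] := by
            have := ih X [] (by simp at hlen ⊢; omega); linarith
      | cons y Y =>
        rw [dwed]
        refine le_min ?_ (le_min ?_ ?_)
        · have h1 := wed_le_diag w hwnn x y X Y
          have h2 := ih X Y (by simp at hlen ⊢; omega)
          linarith
        · have h1 := wed_le_del w hwnn x X (y :: Y)
          have h2 := ih X (y :: Y) (by simp at hlen ⊢; omega)
          linarith
        · have h1 := wed_le_ins w hwnn y (x :: X) Y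
          have h2 := ih (x :: X) Y (by simp at hlen ⊢; omega)
          linarith

include hwnn in
lemma dwed_le_wCost : ∀ n (A : List Pt) (d : Pt) (X Y FX FY : List α),
    A.length ≤ n →
    IsPath d (d.1 + X.length, d.2 + Y.length) A →
    (∀ i, FX[d.1 + i]? = X[i]?) → (∀ j, FY[d.2 + j]? = Y[j]?) →
    dwed w X Y ≤ wCost w FX FY A := by
  intro n
  induction n with
  | zero =>
    intro A d X Y FX FY hlen hpath hFX hFY
    have : A = [] := List.length_eq_zero_iff.1 (Nat.le_zero.1 hlen)
    subst this
    simp [IsPath] at hpath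
  | succ n ih =>
    intro A d X Y FX FY hlen hpath hFX hFY
    cases A with
    | nil => simp [IsPath] at hpath
    | cons s rest =>
      obtain ⟨h1, h2, h3⟩ := hpath
      have hs : d = s := by simpa using h1.symm
      subst hs
      cases rest with
      | nil =>
        have hd : d = (d.1 + X.length, d.2 + Y.length) := by simpa using h2
        have hX : X = [] := by
          have := congrArg Prod.fst hd; simp at this
          exact this
        have hY : Y = [] := by
          have := congrArg Prod.snd hd; simp at this
          exact this
        subst hX; subst hY
        rw [dwed]
        exact wCost_nonneg w hwnn _ _ _
      | cons p rest' =>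
        have hstep : AlignStep d p := (List.isChain_cons_cons.1 h3).1
        have hpath' : IsPath p (d.1 + X.length, d.2 + Y.length) (p :: rest') :=
          ⟨rfl, by rw [List.getLast?_cons_cons] at h2; exact h2, (List.isChain_cons_cons.1 h3).2⟩
        have hlen' : (p :: rest').length ≤ n := by
          simp at hlen ⊢; omega
        rw [wCost_cons_cons]
        rcases hstep with h | h | h
        · -- horizontal: deletion of X-character
          subst h
          have hle := (isPath_le hpath').1
          cases X with
          | nil => simp at hle
          | cons x X' =>
            have hrec : dwed w X' Y ≤ wCost w FX FY ((d.1 + 1, d.2) :: rest') := by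
              refine ih _ (d.1 + 1, d.2) X' Y FX FY hlen' ?_ ?_ hFY
              · have he : d.1 + (x :: X').length = (d.1 + 1) + X'.length := by
                  simp only [List.length_cons]; omega
                rw [he] at hpath'
                exact hpath'
              · intro i
                have he : d.1 + 1 + i = d.1 + (i + 1) := by omega
                show FX[d.1 + 1 + i]? = X'[i]?
                rw [he, hFX (i + 1)]
                rfl
            have hw : wStep w FX FY (d, (d.1 + 1, d.2)) = w (some x) none := by
              unfold wStep
              rw [if_neg (by simp), if_pos rfl]
              have h0 := hFX 0
              rw [Nat.add_zero] at h0
              rw [h0]; rfl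
            rw [hw]
            have := dwed_del_le' w x X' Y
            linarith
        · -- vertical: insertion of Y-character
          subst h
          have hle := (isPath_le hpath').2
          cases Y with
          | nil => simp at hle
          | cons y Y' =>
            have hrec : dwed w X Y' ≤ wCost w FX FY ((d.1, d.2 + 1) :: rest') := by
              refine ih _ (d.1, d.2 + 1) X Y' FX FY hlen' ?_ hFX ?_
              · have he : d.2 + (y :: Y').length = (d.2 + 1) + Y'.length := by
                  simp only [List.length_cons]; omega
                rw [he] at hpath'
                exact hpath'
              · intro j
                have he : d.2 + 1 + j = d.2 + (j + 1) := by omega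
                show FY[d.2 + 1 + j]? = Y'[j]?
                rw [he, hFY (j + 1)]
                rfl
            have hw : wStep w FX FY (d, (d.1, d.2 + 1)) = w none (some y) := by
              unfold wStep
              rw [if_neg (by simp), if_neg (by simp)]
              have h0 := hFY 0
              rw [Nat.add_zero] at h0
              rw [h0]; rfl
            rw [hw]
            have := dwed_ins_le' w y X Y'
            linarith
        · -- diagonal
          subst h
          have hle := isPath_le hpath'
          cases X with
          | nil => have := hle.1; simp at this
          | cons x X' =>
            cases Y with
            | nil => have := hle.2; simp at this
            | cons y Y' =>
              have hrec : dwed w X' Y' ≤ wCost w FX FY ((d.1 + 1, d.2 + 1) :: rest') := by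
                refine ih _ (d.1 + 1, d.2 + 1) X' Y' FX FY hlen' ?_ ?_ ?_
                · have he1 : d.1 + (x :: X').length = (d.1 + 1) + X'.length := by
                    simp only [List.length_cons]; omega
                  have he2 : d.2 + (y :: Y').length = (d.2 + 1) + Y'.length := by
                    simp only [List.length_cons]; omega
                  rw [he1, he2] at hpath'
                  exact hpath'
                · intro i
                  have he : d.1 + 1 + i = d.1 + (i + 1) := by omega
                  show FX[d.1 + 1 + i]? = X'[i]?
                  rw [he, hFX (i + 1)]
                  rfl
                · intro j
                  have he : d.2 + 1 + j = d.2 + (j + 1) := by omega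
                  show FY[d.2 + 1 + j]? = Y'[j]?
                  rw [he, hFY (j + 1)]
                  rfl
              have hw : wStep w FX FY (d, (d.1 + 1, d.2 + 1)) = w (some x) (some y) := by
                unfold wStep
                rw [if_pos rfl]
                have h0 := hFX 0
                rw [Nat.add_zero] at h0
                have h0' := hFY 0
                rw [Nat.add_zero] at h0'
                rw [h0, h0']; rfl
              rw [hw]
              have := dwed_diag_le' w x y X' Y'
              linarith

include hwnn in
lemma dwed_le_wed (X Y : List α) : dwed w X Y ≤ wed w X Y := by
  rw [wed_eq_sInf]
  refine le_csInf (wedSet_nonempty w X Y) ?_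
  rintro c ⟨A, hA, rfl⟩
  refine dwed_le_wCost w hwnn A.length A (0, 0) X Y X Y le_rfl ?_ ?_ ?_
  · simpa using hA
  · intro i; rw [Nat.zero_add]
  · intro j; rw [Nat.zero_add]

include hwnn in
lemma wed_eq_dwed (X Y : List α) : wed w X Y = dwed w X Y :=
  le_antisymm (wed_le_dwed w hwnn (X.length + Y.length) X Y le_rfl) (dwed_le_wed w hwnn X Y)

end

end AuxWED

/-- If the weight function satisfies the triangle inequality, then matched
end characters can be stripped: `wed(a·X, a·Y) = wed(X,Y) = wed(X·a, Y·a)`. -/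
theorem wed_strip_matched_ends {α : Type*} (w : Option α → Option α → ℝ)
    (hw0 : ∀ a, w a a = 0) (hwnn : ∀ a b, 0 ≤ w a b)
    (htri : ∀ a b c, w a b ≤ w a c + w c b)
    (a : α) (X Y : List α) :
    wed w (a :: X) (a :: Y) = wed w X Y ∧ wed w (X ++ [a]) (Y ++ [a]) = wed w X Y := by
  constructor
  · rw [wed_eq_dwed w hwnn, wed_eq_dwed w hwnn]
    exact dwed_cons_cons w hw0 hwnn htri a X Y
  · rw [wed_eq_dwed w hwnn, wed_eq_dwed w hwnn]
    exact dwed_append_append w hw0 hwnn htri a (X.length + Y.length) X Y le_rfl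
end

section
/- (Deletion penalty in the gadget) In the setting of the min-plus gadget with weight function w_{A,B} (all insertions and deletions cost F, all substitutions cost between F − pE − pqD and 2F, and F exceeds (|X|+|Y|) times any other cost term), any alignment A : X_ℓ[a..b) → Y that deletes at least one character of X_ℓ[a..b) has cost at least (|Y|+1)·F + R where |R| < F; in particular its cost exceeds the cost of any alignment that deletes no characters and uses no substitution of cost 2F. -/
section GadgetHelpers

lemma edges_nil' : edges ([] : List Pt) = [] := rfl
lemma edges_single' (a : Pt) : edges [a] = [] := rfl
lemma edges_cons' (a b : Pt) (l : List Pt) :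
    edges (a :: b :: l) = (a, b) :: edges (b :: l) := rfl

lemma mem_of_mem_edges : ∀ {A : List Pt} {e : Pt × Pt}, e ∈ edges A → e.1 ∈ A ∧ e.2 ∈ A
  | [], e, h => by simp [edges_nil'] at h
  | [a], e, h => by simp [edges_single'] at h
  | a :: b :: l, e, h => by
      rw [edges_cons'] at h
      rcases List.mem_cons.mp h with h | h
      · subst h
        exact ⟨List.mem_cons_self, List.mem_cons_of_mem _ List.mem_cons_self⟩
      · obtain ⟨h1, h2⟩ := mem_of_mem_edges h
        exact ⟨List.mem_cons_of_mem _ h1, List.mem_cons_of_mem _ h2⟩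

lemma edges_rel : ∀ {A : List Pt} {e : Pt × Pt}, A.Chain' AlignStep → e ∈ edges A →
    AlignStep e.1 e.2
  | [], e, _, h => by simp [edges_nil'] at h
  | [a], e, _, h => by simp [edges_single'] at h
  | a :: b :: l, e, hc, h => by
      rw [edges_cons'] at h
      rcases List.isChain_cons_cons.mp hc with ⟨hab, hc'⟩
      rcases List.mem_cons.mp h with h | h
      · subst h; exact hab
      · exact edges_rel hc' h

lemma alignStep_mono {p q : Pt} (h : AlignStep p q) : p.1 ≤ q.1 ∧ p.2 ≤ q.2 := by
  rcases h with h | h | h <;> subst h <;> constructor <;> simp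

lemma mono_le_last : ∀ {A : List Pt} {t p : Pt}, A.Chain' AlignStep →
    A.getLast? = some t → p ∈ A → p.1 ≤ t.1 ∧ p.2 ≤ t.2
  | [], t, p, _, ht, hp => by simp at hp
  | [a], t, p, _, ht, hp => by
      simp at ht hp; subst ht; subst hp; exact ⟨le_refl _, le_refl _⟩
  | a :: b :: l, t, p, hc, ht, hp => by
      rcases List.isChain_cons_cons.mp hc with ⟨hab, hc'⟩
      rw [List.getLast?_cons_cons] at ht
      rcases List.mem_cons.mp hp with hp | hp
      · subst hp
        obtain ⟨h1, h2⟩ := mono_le_last hc' ht List.mem_cons_self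
        obtain ⟨h3, h4⟩ := alignStep_mono hab
        exact ⟨le_trans h3 h1, le_trans h4 h2⟩
      · exact mono_le_last hc' ht hp

lemma tele (g : Pt → ℕ) (hg : ∀ p q : Pt, AlignStep p q → g p ≤ g q) :
    ∀ (A : List Pt) (s t : Pt), A.Chain' AlignStep → A.head? = some s →
      A.getLast? = some t →
      ((edges A).map (fun e => g e.2 - g e.1)).sum + g s = g t
  | [], s, t, _, hs, _ => by simp at hs
  | [a], s, t, _, hs, ht => by
      simp at hs ht; subst hs; subst ht; simp [edges_single']
  | a :: b :: l, s, t, hc, hs, ht => by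
      rcases List.isChain_cons_cons.mp hc with ⟨hab, hc'⟩
      simp at hs; subst hs
      rw [List.getLast?_cons_cons] at ht
      have IH := tele g hg (b :: l) b t hc' rfl ht
      have hle := hg _ _ hab
      rw [edges_cons']
      simp only [List.map_cons, List.sum_cons]
      omega

/-- horizontal displacement of an edge -/
def d1 (e : Pt × Pt) : ℕ := e.2.1 - e.1.1
/-- vertical displacement of an edge -/
def d2 (e : Pt × Pt) : ℕ := e.2.2 - e.1.2
/-- excess of horizontal over vertical displacement -/
def dd (e : Pt × Pt) : ℕ := d1 e - d2 e
/-- product of displacements (1 exactly for diagonal edges) -/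
def dp (e : Pt × Pt) : ℕ := d1 e * d2 e

lemma path_sums {m n : ℕ} {A : List Pt} (hA : IsPath (0, 0) (m, n) A) :
    ((edges A).map d1).sum = m ∧ ((edges A).map d2).sum = n := by
  obtain ⟨hh, hl, hc⟩ := hA
  have h1 := tele (fun p => p.1) (fun p q h => (alignStep_mono h).1) A (0, 0) (m, n) hc hh hl
  have h2 := tele (fun p => p.2) (fun p q h => (alignStep_mono h).2) A (0, 0) (m, n) hc hh hl
  simp only [add_zero] at h1 h2
  exact ⟨h1, h2⟩

lemma sum_affine (S : List (Pt × Pt)) (f g : Pt × Pt → ℕ) (F c : ℝ) :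
    (S.map (fun e => (f e : ℝ) * F - (g e : ℝ) * c)).sum
      = ((S.map f).sum : ℝ) * F - ((S.map g).sum : ℝ) * c := by
  induction S with
  | nil => simp
  | cons a l ih =>
      simp only [List.map_cons, List.sum_cons, ih]
      push_cast
      ring

lemma sum_affine' (S : List (Pt × Pt)) (f g : Pt × Pt → ℕ) (F c : ℝ) :
    (S.map (fun e => (f e : ℝ) * F + (g e : ℝ) * c)).sum
      = ((S.map f).sum : ℝ) * F + ((S.map g).sum : ℝ) * c := by
  induction S with
  | nil => simp
  | cons a l ih =>
      simp only [List.map_cons, List.sum_cons, ih]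
      push_cast
      ring

lemma key_lower {α : Type*} (w : Option α → Option α → ℝ) (F c : ℝ)
    (hc : 0 ≤ c) (hF0 : 0 < F) (X Y : List α)
    (hdel : ∀ a : α, w (some a) none = F)
    (hins : ∀ b : α, w none (some b) = F)
    (hsub : ∀ a b : α, w (some a) (some b) = 2 * F ∨ |w (some a) (some b) - F| ≤ c)
    {A : List Pt} (hA : IsPath (0, 0) (X.length, Y.length) A) :
    ∀ e ∈ edges A, ((d2 e + dd e : ℕ) : ℝ) * F - ((dp e : ℕ) : ℝ) * c ≤ wStep w X Y e := by
  obtain ⟨hh, hl, hchain⟩ := hA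
  intro e he
  have hstep := edges_rel hchain he
  have hm2 := mono_le_last hchain hl (mem_of_mem_edges he).2
  rcases hstep with h | h | h
  · -- horizontal
    have hx : e.1.1 < X.length := by rw [h] at hm2; simp at hm2; omega
    have hne : e.2 ≠ (e.1.1 + 1, e.1.2 + 1) := by
      rw [h]; intro hcon; rw [Prod.ext_iff] at hcon; simp at hcon
    rw [wStep, if_neg hne, if_pos h, List.getElem?_eq_getElem hx, hdel]
    simp [d1, d2, dd, dp, h]
  · -- vertical
    have hy : e.1.2 < Y.length := by rw [h] at hm2; simp at hm2; omega
    have hne : e.2 ≠ (e.1.1 + 1, e.1.2 + 1) := by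
      rw [h]; intro hcon; rw [Prod.ext_iff] at hcon; simp at hcon
    have hne2 : e.2 ≠ (e.1.1 + 1, e.1.2) := by
      rw [h]; intro hcon; rw [Prod.ext_iff] at hcon; simp at hcon
    rw [wStep, if_neg hne, if_neg hne2, List.getElem?_eq_getElem hy, hins]
    simp [d1, d2, dd, dp, h]
  · -- diagonal
    have hx : e.1.1 < X.length := by rw [h] at hm2; simp at hm2; omega
    have hy : e.1.2 < Y.length := by rw [h] at hm2; simp at hm2; omega
    rw [wStep, if_pos h, List.getElem?_eq_getElem hx, List.getElem?_eq_getElem hy]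
    have hd : ((d2 e + dd e : ℕ) : ℝ) = 1 ∧ ((dp e : ℕ) : ℝ) = 1 := by
      constructor <;> · rw [show ((1 : ℝ) = ((1 : ℕ) : ℝ)) by norm_num]
                        congr 1
                        simp [d1, d2, dd, dp, h]
    rw [hd.1, hd.2, one_mul, one_mul]
    rcases hsub X[e.1.1] Y[e.1.2] with hs | hs
    · rw [hs]; linarith
    · rw [abs_le] at hs; linarith [hs.1]

lemma key_upper {α : Type*} (w : Option α → Option α → ℝ) (F c : ℝ)
    (hc : 0 ≤ c) (X Y : List α)
    (hins : ∀ b : α, w none (some b) = F)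
    (hsub : ∀ a b : α, w (some a) (some b) = 2 * F ∨ |w (some a) (some b) - F| ≤ c)
    {A : List Pt} (hA : IsPath (0, 0) (X.length, Y.length) A)
    (hnoh : ∀ e ∈ edges A, e.2 ≠ (e.1.1 + 1, e.1.2))
    (hno2 : ∀ e ∈ edges A, e.2 = (e.1.1 + 1, e.1.2 + 1) → wStep w X Y e ≠ 2 * F) :
    ∀ e ∈ edges A, wStep w X Y e ≤ ((d2 e : ℕ) : ℝ) * F + ((d1 e : ℕ) : ℝ) * c := by
  obtain ⟨hh, hl, hchain⟩ := hA
  intro e he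
  have hstep := edges_rel hchain he
  have hm2 := mono_le_last hchain hl (mem_of_mem_edges he).2
  rcases hstep with h | h | h
  · exact absurd h (hnoh e he)
  · -- vertical
    have hy : e.1.2 < Y.length := by rw [h] at hm2; simp at hm2; omega
    have hne : e.2 ≠ (e.1.1 + 1, e.1.2 + 1) := by
      rw [h]; intro hcon; rw [Prod.ext_iff] at hcon; simp at hcon
    have hne2 : e.2 ≠ (e.1.1 + 1, e.1.2) := by
      rw [h]; intro hcon; rw [Prod.ext_iff] at hcon; simp at hcon
    rw [wStep, if_neg hne, if_neg hne2, List.getElem?_eq_getElem hy, hins]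
    simp [d1, d2, h]
  · -- diagonal
    have hx : e.1.1 < X.length := by rw [h] at hm2; simp at hm2; omega
    have hy : e.1.2 < Y.length := by rw [h] at hm2; simp at hm2; omega
    have hw : wStep w X Y e = w (some (X.get ⟨e.1.1, hx⟩)) (some (Y.get ⟨e.1.2, hy⟩)) := by
      rw [wStep, if_pos h, List.getElem?_eq_getElem hx, List.getElem?_eq_getElem hy]
      rfl
    rw [hw]
    have hd : ((d2 e : ℕ) : ℝ) = 1 ∧ ((d1 e : ℕ) : ℝ) = 1 := by
      constructor <;> · rw [show ((1 : ℝ) = ((1 : ℕ) : ℝ)) by norm_num]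
                        congr 1
                        simp [d1, d2, h]
    rw [hd.1, hd.2, one_mul, one_mul]
    rcases hsub (X.get ⟨e.1.1, hx⟩) (Y.get ⟨e.1.2, hy⟩) with hs | hs
    · exact absurd (hw.trans hs) (hno2 e he h)
    · rw [abs_le] at hs; linarith [hs.2]

end GadgetHelpers

/-- Deletion penalty in the gadget: if all insertions and deletions cost
`F`, every substitution either costs exactly `2F` or lies within `c` of `F`, and
`F > (|X|+|Y|)·c`, then any alignment of `X` onto `Y` (with `|X| ≤ |Y|`) that deletes at
least one character of `X` has cost at least `(|Y|+1)·F - (|X|+|Y|)·c`; in particular it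
costs strictly more than any alignment that deletes no characters and uses no substitution
of cost `2F`. -/
theorem gadget_deletion_penalty {α : Type*} (w : Option α → Option α → ℝ) (F c : ℝ)
    (hc : 0 ≤ c) (X Y : List α) (hlen : X.length ≤ Y.length)
    (hdel : ∀ a : α, w (some a) none = F)
    (hins : ∀ b : α, w none (some b) = F)
    (hsub : ∀ a b : α, w (some a) (some b) = 2 * F ∨ |w (some a) (some b) - F| ≤ c)
    (hF : ((X.length + Y.length : ℕ) : ℝ) * c < F)
    (A : List Pt) (hA : IsPath (0, 0) (X.length, Y.length) A)
    (hdelstep : ∃ e ∈ edges A, e.2 = (e.1.1 + 1, e.1.2)) :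
    ((Y.length : ℝ) + 1) * F - ((X.length + Y.length : ℕ) : ℝ) * c ≤ wCost w X Y A ∧
    ∀ A' : List Pt, IsPath (0, 0) (X.length, Y.length) A' →
      (∀ e ∈ edges A', e.2 ≠ (e.1.1 + 1, e.1.2)) →
      (∀ e ∈ edges A', e.2 = (e.1.1 + 1, e.1.2 + 1) → wStep w X Y e ≠ 2 * F) →
      wCost w X Y A' < wCost w X Y A := by
  obtain ⟨hS1, hS2⟩ := path_sums hA
  have hF0 : 0 < F := lt_of_le_of_lt (by positivity) hF
  set m := X.length with hm
  set n := Y.length with hn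
  -- lower bound on the cost of A
  have hlow : ((n : ℝ) + 1) * F - (m : ℝ) * c ≤ wCost w X Y A := by
    have hptw := key_lower w F c hc hF0 X Y hdel hins hsub hA
    have hsum : ((edges A).map (fun e => ((d2 e + dd e : ℕ) : ℝ) * F
        - ((dp e : ℕ) : ℝ) * c)).sum ≤ wCost w X Y A :=
      List.sum_le_sum hptw
    rw [sum_affine] at hsum
    have hdd : 1 ≤ ((edges A).map dd).sum := by
      obtain ⟨e0, he0, h0⟩ := hdelstep
      have h1 : dd e0 = 1 := by simp [dd, d1, d2, h0]
      calc 1 = dd e0 := h1.symm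
      _ ≤ ((edges A).map dd).sum := List.le_sum_of_mem (List.mem_map_of_mem (f := dd) he0)
    have hsplit : ((edges A).map (fun e => d2 e + dd e)).sum
        = ((edges A).map d2).sum + ((edges A).map dd).sum := by
      rw [← List.sum_map_add]
    have hdpd1 : ((edges A).map dp).sum ≤ ((edges A).map d1).sum := by
      apply List.sum_le_sum
      intro e he
      have hstep := edges_rel hA.2.2 he
      rcases hstep with h | h | h <;> simp [dp, d1, d2, h]
    have h1 : ((n : ℝ) + 1) * F ≤ ((((edges A).map (fun e => d2 e + dd e)).sum : ℕ) : ℝ) * F := by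
      apply mul_le_mul_of_nonneg_right _ (le_of_lt hF0)
      have : n + 1 ≤ ((edges A).map (fun e => d2 e + dd e)).sum := by
        rw [hsplit, hS2]; omega
      calc ((n : ℝ) + 1) = ((n + 1 : ℕ) : ℝ) := by push_cast; ring
      _ ≤ _ := Nat.cast_le.mpr this
    have h2 : ((((edges A).map dp).sum : ℕ) : ℝ) * c ≤ (m : ℝ) * c := by
      apply mul_le_mul_of_nonneg_right _ hc
      rw [← hS1]
      exact_mod_cast hdpd1
    linarith
  constructor
  · have : (m : ℝ) * c ≤ ((m + n : ℕ) : ℝ) * c := by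
      apply mul_le_mul_of_nonneg_right _ hc
      push_cast
      have : (0 : ℝ) ≤ (n : ℝ) := Nat.cast_nonneg n
      linarith
    linarith
  · intro A' hA' hnoh hno2
    obtain ⟨hS1', hS2'⟩ := path_sums hA'
    have hptw := key_upper w F c hc X Y hins hsub hA' hnoh hno2
    have hup : wCost w X Y A' ≤ ((edges A').map (fun e => ((d2 e : ℕ) : ℝ) * F
        + ((d1 e : ℕ) : ℝ) * c)).sum :=
      List.sum_le_sum hptw
    rw [sum_affine', hS1', hS2'] at hup
    have h2m : 2 * (m : ℝ) * c < F := by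
      have hmn : (2 : ℝ) * (m : ℝ) ≤ ((m + n : ℕ) : ℝ) := by
        push_cast
        have : (m : ℝ) ≤ (n : ℝ) := Nat.cast_le.mpr hlen
        linarith
      calc 2 * (m : ℝ) * c ≤ ((m + n : ℕ) : ℝ) * c := mul_le_mul_of_nonneg_right hmn hc
      _ < F := hF
    linarith
end
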